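/- arXiv:2010.00580 — 6 statements merged into one kernel-verified Lean document; each statement's English description precedes it below -/
import Mathlib

section
/- For every real κ with 1 < κ < 4, the five vectors v_x, v_1, v_2, v_{-1}, v_{-2} of the standard pyramidal disk packing satisfy: ⟨v,v⟩ = 1 for each of them; ⟨v_x, v_i⟩ = −1 for every i ∈ {1, 2, −1, −2}; ⟨v_1, v_2⟩ = ⟨v_2, v_{-1}⟩ = ⟨v_{-1}, v_{-2}⟩ = ⟨v_{-2}, v_1⟩ = −1; and ⟨v_1, v_{-1}⟩ < −1 and ⟨v_2, v_{-2}⟩ < −1. (Thus they realize a disk packing whose tangency graph is the square-pyramid graph ⊠.) -/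
noncomputable section

/-- The Lorentzian product on ℝ⁴: ⟨u,v⟩ = u₁v₁ + u₂v₂ + u₃v₃ − u₄v₄. -/
def lprod (u v : Fin 4 → ℝ) : ℝ := u 0 * v 0 + u 1 * v 1 + u 2 * v 2 - u 3 * v 3

/-- Inversive coordinates of the disks of the standard pyramidal disk packing. -/
def vx : Fin 4 → ℝ := ![0, -1, 1, 1]
def v1 (κ : ℝ) : Fin 4 → ℝ := ![0, 1 - κ, -1, κ - 1]
def v2 (κ : ℝ) : Fin 4 → ℝ := ![2 / Real.sqrt κ, 0, 2 / κ - 1, 2 / κ]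
def vm1 : Fin 4 → ℝ := ![0, 1, 1, 1]
def vm2 (κ : ℝ) : Fin 4 → ℝ := ![-(2 / Real.sqrt κ), 0, 2 / κ - 1, 2 / κ]

/-- For every `1 < κ < 4`, the five vectors of the standard pyramidal disk packing
are normalized, the tangent pairs have product `−1`, and the two remaining pairs have
product `< −1`; hence they realize a disk packing with tangency graph `⊠`. -/
theorem pyramidal_disk_packing_realizes_square_pyramid
    (κ : ℝ) (hκ1 : 1 < κ) (hκ4 : κ < 4) :
    lprod vx vx = 1 ∧ lprod (v1 κ) (v1 κ) = 1 ∧ lprod (v2 κ) (v2 κ) = 1 ∧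
    lprod vm1 vm1 = 1 ∧ lprod (vm2 κ) (vm2 κ) = 1 ∧
    lprod vx (v1 κ) = -1 ∧ lprod vx (v2 κ) = -1 ∧
    lprod vx vm1 = -1 ∧ lprod vx (vm2 κ) = -1 ∧
    lprod (v1 κ) (v2 κ) = -1 ∧ lprod (v2 κ) vm1 = -1 ∧
    lprod vm1 (vm2 κ) = -1 ∧ lprod (vm2 κ) (v1 κ) = -1 ∧
    lprod (v1 κ) vm1 < -1 ∧ lprod (v2 κ) (vm2 κ) < -1 := by

  have hκ0 : (0:ℝ) < κ := by linarith
  have hs : Real.sqrt κ * Real.sqrt κ = κ := Real.mul_self_sqrt hκ0.le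
  have hsne : Real.sqrt κ ≠ 0 := by positivity
  have hκne : κ ≠ 0 := hκ0.ne'
  refine ⟨?_, ?_, ?_, ?_, ?_, ?_, ?_, ?_, ?_, ?_, ?_, ?_, ?_, ?_, ?_⟩ <;>
    simp only [lprod, vx, v1, v2, vm1, vm2, Matrix.cons_val_zero, Matrix.cons_val_one,
      Matrix.head_cons, Matrix.cons_val_two, Matrix.tail_cons, Matrix.cons_val_three]
  · ring
  · ring
  · field_simp; rw [Real.sq_sqrt hκ0.le]; ring
  · ring
  · field_simp; rw [Real.sq_sqrt hκ0.le]; ring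
  · ring
  · ring
  · ring
  · ring
  · field_simp; ring
  · ring
  · ring
  · field_simp; ring
  · nlinarith
  · have h4 : (2 / Real.sqrt κ) * (2 / Real.sqrt κ) = 4 / κ := by
      rw [div_mul_div_comm, hs]; norm_num
    have key : 2/Real.sqrt κ * -(2/Real.sqrt κ) + 0*0 + (2/κ-1)*(2/κ-1) - 2/κ*(2/κ)
        = 1 - 2*(4/κ) := by
      rw [show 2/Real.sqrt κ * -(2/Real.sqrt κ)
          = -((2/Real.sqrt κ)*(2/Real.sqrt κ)) from by ring, h4]
      field_simp; ring
    rw [key]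
    have h2 : (1:ℝ) < 4/κ := by rw [lt_div_iff₀ hκ0]; linarith
    linarith
end
end

section
/- For every real κ > 0, one has ⟨v_1, v_{-1}⟩ < −1 and ⟨v_2, v_{-2}⟩ < −1 if and only if 1 < κ < 4; moreover at κ = 1 one has ⟨v_1, v_{-1}⟩ = −1 (the disks d₁ and d₋₁ become tangent) and at κ = 4 one has ⟨v_2, v_{-2}⟩ = −1 (the disks d₂ and d₋₂ become tangent). Hence the standard pyramidal disk packings are exactly the configurations with parameter κ in the open interval (1, 4). -/
noncomputable section

/-- For `κ > 0`, the disjoint pairs of the standard pyramidal disk packing have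
inversive product `< −1` iff `1 < κ < 4`; at `κ = 1` the disks `d₁, d₋₁` become
tangent and at `κ = 4` the disks `d₂, d₋₂` become tangent. -/
theorem pyramidal_parameter_iff (κ : ℝ) (hκ : 0 < κ) :
    ((lprod (v1 κ) vm1 < -1 ∧ lprod (v2 κ) (vm2 κ) < -1) ↔ (1 < κ ∧ κ < 4)) ∧
    lprod (v1 1) vm1 = -1 ∧
    lprod (v2 4) (vm2 4) = -1 := by
  have hsq : Real.sqrt κ * Real.sqrt κ = κ := Real.mul_self_sqrt hκ.le
  have h1 : ∀ k : ℝ, lprod (v1 k) vm1 = 1 - 2 * k := by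
    intro k; simp [lprod, v1, vm1]; ring
  have h2 : lprod (v2 κ) (vm2 κ) = 1 - 8 / κ := by
    simp only [lprod, v2, vm2, Matrix.cons_val_zero, Matrix.cons_val_one, Matrix.head_cons,
      Matrix.cons_val_two, Matrix.tail_cons, Matrix.cons_val_three]
    have hs : Real.sqrt κ ≠ 0 := by positivity
    field_simp
    rw [Real.sq_sqrt hκ.le]; ring
  refine ⟨?_, ?_, ?_⟩
  · rw [h1, h2]
    constructor
    · rintro ⟨ha, hb⟩
      constructor
      · linarith
      · have : 8 / κ > 2 := by linarith
        rw [gt_iff_lt, lt_div_iff₀ hκ] at this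
        linarith
    · rintro ⟨ha, hb⟩
      refine ⟨by linarith, ?_⟩
      have : 2 < 8 / κ := by rw [lt_div_iff₀ hκ]; linarith
      linarith
  · rw [h1]; norm_num
  · have h4 : (0:ℝ) < 4 := by norm_num
    have : lprod (v2 4) (vm2 4) = 1 - 8 / 4 := by
      simp only [lprod, v2, vm2, Matrix.cons_val_zero, Matrix.cons_val_one, Matrix.head_cons,
        Matrix.cons_val_two, Matrix.tail_cons, Matrix.cons_val_three]
      have hsq4 : Real.sqrt 4 * Real.sqrt 4 = 4 := Real.mul_self_sqrt (by norm_num)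
      have hs : Real.sqrt 4 ≠ 0 := by positivity
      field_simp
      ring
    rw [this]; norm_num
end
end

section
/- For every real κ with 1 < κ < 4, the inversive products of the two disjoint pairs of the standard pyramidal disk packing satisfy ⟨v_1, v_{-1}⟩ = 1 − 2κ and ⟨v_2, v_{-2}⟩ = 1 − 8/κ. Consequently, setting κ₁ := κ and defining κ₂ by ⟨v_2, v_{-2}⟩ = 1 − 2κ₂, one has κ₂ = 4/κ and hence κ₁ · κ₂ = 4. -/
noncomputable section

/-- For `1 < κ < 4`, the inversive products of the two disjoint pairs are
`⟨v₁, v₋₁⟩ = 1 − 2κ` and `⟨v₂, v₋₂⟩ = 1 − 8/κ`; consequently the second standard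
curvature `κ₂`, defined by `⟨v₂, v₋₂⟩ = 1 − 2κ₂`, equals `4/κ`, so `κ·κ₂ = 4`. -/
theorem pyramidal_standard_curvatures (κ : ℝ) (hκ1 : 1 < κ) (hκ4 : κ < 4) :
    lprod (v1 κ) vm1 = 1 - 2 * κ ∧
    lprod (v2 κ) (vm2 κ) = 1 - 8 / κ ∧
    ∀ κ₂ : ℝ, lprod (v2 κ) (vm2 κ) = 1 - 2 * κ₂ → κ₂ = 4 / κ ∧ κ * κ₂ = 4 := by
  have hκ0 : (0:ℝ) < κ := by linarith
  have hκ0' : κ ≠ 0 := ne_of_gt hκ0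
  have hs : Real.sqrt κ * Real.sqrt κ = κ := Real.mul_self_sqrt hκ0.le
  have hs0 : Real.sqrt κ ≠ 0 := by positivity
  have h2 : lprod (v2 κ) (vm2 κ) = 1 - 8 / κ := by
    simp only [lprod, v2, vm2]
    norm_num [Matrix.cons_val_zero, Matrix.cons_val_one, Matrix.cons_val_two, Matrix.cons_val_three]
    field_simp
    rw [Real.sq_sqrt hκ0.le]; ring
  refine ⟨by simp [lprod, v1, vm1]; ring, h2, fun κ₂ hk => ?_⟩
  rw [h2] at hk
  have hκ2 : κ₂ = 4 / κ := by
    field_simp at hk ⊢; linarith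
  exact ⟨hκ2, by rw [hκ2]; field_simp⟩

end
end

section
/- For every real κ with 1 < κ < 4, there is a unique vector v ∈ ℝ⁴ with ⟨v,v⟩ = 1, ⟨v, v_1⟩ = 0, ⟨v, v_{-1}⟩ = 0, ⟨v, v_x⟩ = 0 and ⟨v, v_2⟩ > 1, namely the mirror-disk vector v_2* = (1, 0, 0, 0); moreover ⟨v_2*, v_2⟩ = 2/√κ, which is strictly greater than 1. -/
noncomputable section

/-- The mirror disk `d₂*`. -/
def v2star : Fin 4 → ℝ := ![1, 0, 0, 0]

/-- For `1 < κ < 4`, the unique normalized vector orthogonal to `v₁`, `v₋₁`, `v_x`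
and with product `> 1` with `v₂` is the mirror-disk vector `v₂* = (1,0,0,0)`;
moreover `⟨v₂*, v₂⟩ = 2/√κ > 1`. -/
theorem mirror_disk_two_unique (κ : ℝ) (hκ1 : 1 < κ) (hκ4 : κ < 4) :
    (∀ v : Fin 4 → ℝ,
      (lprod v v = 1 ∧ lprod v (v1 κ) = 0 ∧ lprod v vm1 = 0 ∧ lprod v vx = 0 ∧
        1 < lprod v (v2 κ)) ↔ v = v2star) ∧
    lprod v2star (v2 κ) = 2 / Real.sqrt κ ∧
    1 < 2 / Real.sqrt κ := by

  have h0 : (0:ℝ) < Real.sqrt κ := Real.sqrt_pos.mpr (by linarith)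
  have hs2 : Real.sqrt κ < 2 := by
    have : Real.sqrt κ < Real.sqrt 4 := Real.sqrt_lt_sqrt (by linarith) hκ4
    simpa [show Real.sqrt 4 = 2 by
      rw [show (4:ℝ) = 2^2 by norm_num, Real.sqrt_sq (by norm_num)]] using this
  have hgt : 1 < 2 / Real.sqrt κ := (one_lt_div h0).mpr hs2
  refine ⟨?_, ?_, hgt⟩
  · intro v
    constructor
    · rintro ⟨hn, h1, hm1, hx, h2⟩
      simp only [lprod, v1, vm1, vx, v2, Matrix.cons_val_zero, Matrix.cons_val_one,
        Matrix.head_cons, Matrix.cons_val_two, Matrix.tail_cons, Matrix.cons_val_three] at *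
      have hb : v 1 = 0 := by linarith
      have hcd : v 2 = v 3 := by linarith
      have hd : v 3 = 0 := by
        have : -(v 3 * κ) = 0 := by nlinarith
        have hκ0 : κ ≠ 0 := by linarith
        rcases mul_eq_zero.mp (by linarith : v 3 * κ = 0) with h|h
        · exact h
        · exact absurd h hκ0
      have hc : v 2 = 0 := by rw [hcd, hd]
      have ha2 : v 0 * v 0 = 1 := by nlinarith
      have ha : v 0 = 1 := by
        rcases mul_self_eq_one_iff.mp ha2 with h | h
        · exact h
        · exfalso
          rw [h, hb, hcd, hd] at h2
          have : (0:ℝ) < 2 / Real.sqrt κ := by positivity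
          nlinarith
      funext i
      fin_cases i <;> simp [v2star, ha, hb, hc, hd]
    · rintro rfl
      refine ⟨by norm_num [lprod, v2star, Matrix.cons_val_two, Matrix.cons_val_three, Matrix.tail_cons, Matrix.head_cons], by norm_num [lprod, v2star, v1, Matrix.cons_val_two, Matrix.cons_val_three, Matrix.tail_cons, Matrix.head_cons],
        by norm_num [lprod, v2star, vm1, Matrix.cons_val_two, Matrix.cons_val_three, Matrix.tail_cons, Matrix.head_cons], by norm_num [lprod, v2star, vx, Matrix.cons_val_two, Matrix.cons_val_three, Matrix.tail_cons, Matrix.head_cons], ?_⟩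
      simpa [lprod, v2star, v2] using hgt
  · norm_num [lprod, v2star, v2, Matrix.cons_val_two, Matrix.cons_val_three, Matrix.tail_cons, Matrix.head_cons]
end
end

section
/- For every real κ with 1 < κ < 4, there is a unique vector v ∈ ℝ⁴ with ⟨v,v⟩ = 1, ⟨v, v_2⟩ = 0, ⟨v, v_{-2}⟩ = 0, ⟨v, v_x⟩ = 0 and ⟨v, v_1⟩ > 1, namely the mirror-disk vector v_1* = (0, −√κ/2, −1/√κ, (κ−2)/(2√κ)); moreover ⟨v_1*, v_1⟩ = √κ, which is strictly greater than 1. -/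
noncomputable section

/-- The mirror disk `d₁*`. -/
def v1star (κ : ℝ) : Fin 4 → ℝ :=
  ![0, -(Real.sqrt κ / 2), -(1 / Real.sqrt κ), (κ - 2) / (2 * Real.sqrt κ)]

set_option maxHeartbeats 1000000 in
/-- For `1 < κ < 4`, the unique normalized vector orthogonal to `v₂`, `v₋₂`, `v_x`
and with product `> 1` with `v₁` is the mirror-disk vector
`v₁* = (0, −√κ/2, −1/√κ, (κ−2)/(2√κ))`; moreover `⟨v₁*, v₁⟩ = √κ > 1`. -/
theorem mirror_disk_one_unique (κ : ℝ) (hκ1 : 1 < κ) (hκ4 : κ < 4) :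
    (∀ v : Fin 4 → ℝ,
      (lprod v v = 1 ∧ lprod v (v2 κ) = 0 ∧ lprod v (vm2 κ) = 0 ∧ lprod v vx = 0 ∧
        1 < lprod v (v1 κ)) ↔ v = v1star κ) ∧
    lprod (v1star κ) (v1 κ) = Real.sqrt κ ∧
    1 < Real.sqrt κ := by
  have hκ0 : (0:ℝ) < κ := by linarith
  have hs0 : 0 < Real.sqrt κ := Real.sqrt_pos.mpr hκ0
  have hs : Real.sqrt κ * Real.sqrt κ = κ := Real.mul_self_sqrt hκ0.le
  have hsne : Real.sqrt κ ≠ 0 := ne_of_gt hs0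
  have hκne : κ ≠ 0 := ne_of_gt hκ0
  have hs1 : 1 < Real.sqrt κ := by nlinarith
  have hmain : lprod (v1star κ) (v1 κ) = Real.sqrt κ := by
    simp only [lprod, v1star, v1, Matrix.cons_val_zero, Matrix.cons_val_one, Matrix.head_cons,
      Matrix.cons_val_two, Matrix.tail_cons, Matrix.cons_val_three]
    field_simp
    ring_nf
    nlinarith [hs]
  refine ⟨fun v => ⟨?_, ?_⟩, hmain, hs1⟩
  · rintro ⟨h1, h2, h3, h4, h5⟩
    simp only [lprod, v2, vm2, vx, v1, Matrix.cons_val_zero, Matrix.cons_val_one,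
      Matrix.head_cons, Matrix.cons_val_two, Matrix.tail_cons, Matrix.cons_val_three]
      at h1 h2 h3 h4 h5
    have ha : v 0 = 0 := by
      have h6 : v 0 * (4 / Real.sqrt κ) = 0 := by linear_combination h2 - h3
      have := mul_eq_zero.mp h6
      rcases this with h | h
      · exact h
      · exfalso; rw [div_eq_zero_iff] at h; rcases h with h | h
        · norm_num at h
        · exact hsne h
    rw [ha] at h1 h2
    have hd : v 3 = v 2 * (2 - κ) / 2 := by
      field_simp at h2
      have h2' : Real.sqrt κ * (v 2 * (2 - κ) - 2 * v 3) = 0 := by linear_combination h2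
      rcases mul_eq_zero.mp h2' with h | h
      · exact absurd h hsne
      · linarith
    have hb : v 1 = v 2 * κ / 2 := by rw [hd] at h4; field_simp at h4 ⊢; linarith
    have hc2 : v 2 * v 2 * κ = 1 := by rw [hb, hd] at h1; field_simp at h1; nlinarith
    have hcneg : v 2 < 0 := by
      rw [hb, hd] at h5
      nlinarith
    have hc : v 2 = -(1 / Real.sqrt κ) := by
      have h1s : (1 / Real.sqrt κ) * (1 / Real.sqrt κ) * κ = 1 := by
        field_simp
        rw [sq, hs]
      have : (v 2 + 1 / Real.sqrt κ) * (v 2 - 1 / Real.sqrt κ) * κ = 0 := by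
        linear_combination hc2 - h1s
      have h2' : v 2 - 1 / Real.sqrt κ ≠ 0 := by
        have hp : 0 < 1 / Real.sqrt κ := by positivity
        intro h; nlinarith
      rcases mul_eq_zero.mp this with h | h
      · rcases mul_eq_zero.mp h with h | h
        · linarith
        · exact absurd h h2'
      · exact absurd h hκne
    funext i
    fin_cases i
    · simpa [v1star] using ha
    · show v 1 = v1star κ 1
      simp only [v1star, Matrix.cons_val_one, Matrix.head_cons, Matrix.cons_val_zero]
      rw [hb, hc]; field_simp; nlinarith
    · show v 2 = _
      simp only [v1star, Matrix.cons_val_two, Matrix.tail_cons, Matrix.head_cons]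
      exact hc
    · show v 3 = v1star κ 3
      simp only [v1star, Matrix.cons_val_three, Matrix.tail_cons, Matrix.head_cons,
        Matrix.cons_val_zero]
      rw [hd, hc]; field_simp; ring_nf
  · rintro rfl
    refine ⟨?_, ?_, ?_, ?_, ?_⟩
    · simp only [lprod, v1star, Matrix.cons_val_zero, Matrix.cons_val_one, Matrix.head_cons,
        Matrix.cons_val_two, Matrix.tail_cons, Matrix.cons_val_three]
      field_simp
      ring_nf
      nlinarith [hs]
    · simp only [lprod, v1star, v2, Matrix.cons_val_zero, Matrix.cons_val_one, Matrix.head_cons,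
        Matrix.cons_val_two, Matrix.tail_cons, Matrix.cons_val_three]
      field_simp
      ring_nf
    · simp only [lprod, v1star, vm2, Matrix.cons_val_zero, Matrix.cons_val_one, Matrix.head_cons,
        Matrix.cons_val_two, Matrix.tail_cons, Matrix.cons_val_three]
      field_simp
      ring_nf
    · simp only [lprod, v1star, vx, Matrix.cons_val_zero, Matrix.cons_val_one, Matrix.head_cons,
        Matrix.cons_val_two, Matrix.tail_cons, Matrix.cons_val_three]
      field_simp
      linear_combination hs
    · rw [hmain]; exact hs1
end
end

section
/- For every real κ with 1 < κ < 4, the Lorentzian reflection σ₁(u) = u − 2⟨u, v_1*⟩ v_1* in the mirror vector v_1* satisfies σ₁(v_1) = v_{-1}, σ₁(v_{-1}) = v_1, σ₁(v_2) = v_2, σ₁(v_{-2}) = v_{-2}, σ₁(v_x) = v_x and σ₁(v_t) = v_t; and the Lorentzian reflection σ₂(u) = u − 2⟨u, v_2*⟩ v_2* in the mirror vector v_2* satisfies σ₂(v_2) = v_{-2}, σ₂(v_{-2}) = v_2, σ₂(v_1) = v_1, σ₂(v_{-1}) = v_{-1}, σ₂(v_x) = v_x and σ₂(v_t) = v_t.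 -/
noncomputable section

def vt (κ : ℝ) : Fin 4 → ℝ :=
  ![0, -(2 / Real.sqrt (κ ^ 2 + 4)), κ / Real.sqrt (κ ^ 2 + 4), 0]

/-- Lorentzian reflection in (the hyperplane orthogonal to) the vector `m`. -/
def lreflect (m u : Fin 4 → ℝ) : Fin 4 → ℝ := u - (2 * lprod u m) • m

set_option maxHeartbeats 2000000 in
/-- For `1 < κ < 4`, the Lorentzian reflection in `v₁*` swaps `v₁ ↔ v₋₁` and fixes
`v₂`, `v₋₂`, `v_x`, `v_t`; the Lorentzian reflection in `v₂*` swaps `v₂ ↔ v₋₂`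
and fixes `v₁`, `v₋₁`, `v_x`, `v_t`. -/
theorem mirror_reflections_act (κ : ℝ) (hκ1 : 1 < κ) (hκ4 : κ < 4) :
    lreflect (v1star κ) (v1 κ) = vm1 ∧
    lreflect (v1star κ) vm1 = v1 κ ∧
    lreflect (v1star κ) (v2 κ) = v2 κ ∧
    lreflect (v1star κ) (vm2 κ) = vm2 κ ∧
    lreflect (v1star κ) vx = vx ∧
    lreflect (v1star κ) (vt κ) = vt κ ∧
    lreflect v2star (v2 κ) = vm2 κ ∧
    lreflect v2star (vm2 κ) = v2 κ ∧
    lreflect v2star (v1 κ) = v1 κ ∧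
    lreflect v2star vm1 = vm1 ∧
    lreflect v2star vx = vx ∧
    lreflect v2star (vt κ) = vt κ := by
  have hκ0 : (0:ℝ) < κ := by linarith
  set s := Real.sqrt κ with hsdef
  have hs0 : 0 < s := Real.sqrt_pos.mpr hκ0
  have hs : s * s = κ := Real.mul_self_sqrt hκ0.le
  clear_value s
  subst hs
  have ht0 : 0 < Real.sqrt ((s*s) ^ 2 + 4) := Real.sqrt_pos.mpr (by positivity)
  refine ⟨?_, ?_, ?_, ?_, ?_, ?_, ?_, ?_, ?_, ?_, ?_, ?_⟩ <;>
  · funext i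
    fin_cases i <;>
    · simp only [lreflect, lprod, v1, v2, vm1, vm2, vx, vt, v1star, v2star,
        Pi.sub_apply, Pi.smul_apply, smul_eq_mul, Matrix.cons_val_zero,
        Matrix.cons_val_one, Matrix.head_cons, Matrix.cons_val_two,
        Matrix.tail_cons, Matrix.cons_val_three, Fin.isValue, Fin.reduceFinMk, Matrix.cons_val,
        Real.sqrt_mul_self hs0.le]
      field_simp
      try ring
end
end
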